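/- Identification of the incremental effect for one time point (regression form): Let (X, A, Y) be random variables with A binary. Assume consistency (Y = Y^a on {A = a}) and exchangeability (A ⟂ Y^a | X) for a ∈ {0,1}. Let π(x) = P(A=1|X=x), μ(x,a) = E[Y|X=x, A=a], and let Q be the distribution assigning treatment 1 with probability q(π(X); δ) = δπ(X)/(δπ(X)+1-π(X)). Then E[Y^Q] = E[ (δπ(X)μ(X,1) + (1-π(X))μ(X,0)) / (δπ(X) + 1 - π(X)) ]. -/

import Mathlib

open MeasureTheory ProbabilityTheory

set_option maxHeartbeats 1000000

section Aux

variable {Ω : Type*} {m : MeasurableSpace Ω} [mΩ : MeasurableSpace Ω]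
  {P : Measure Ω} [IsProbabilityMeasure P]

private lemma mul_indicator_integrable {f : Ω → ℝ} (hf : Integrable f P) {s : Set Ω}
    (hs : MeasurableSet s) :
    Integrable (fun ω => f ω * s.indicator (fun _ => (1:ℝ)) ω) P := by
  refine hf.norm.mono'
    (hf.aestronglyMeasurable.mul ((measurable_const.indicator hs).aestronglyMeasurable)) ?_
  refine Filter.Eventually.of_forall fun ω => ?_
  by_cases h : ω ∈ s
  · simp [Set.indicator_of_mem h]
  · simp [Set.indicator_of_notMem h, abs_nonneg]

private lemma condexp_join_of_fact (hm : m ≤ mΩ) {B : Set Ω} (hB : MeasurableSet B) {g : Ω → ℝ}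
    (hg : Measurable g)
    (hfact : ∀ t : Set ℝ, MeasurableSet t →
      (P[(B ∩ g ⁻¹' t).indicator (fun _ => (1:ℝ)) | m]) =ᵐ[P]
        fun ω => (P[B.indicator (fun _ => (1:ℝ)) | m]) ω *
          (P[(g ⁻¹' t).indicator (fun _ => (1:ℝ)) | m]) ω) :
    (P[B.indicator (fun _ => (1:ℝ)) | m]) =ᵐ[P]
      P[B.indicator (fun _ => (1:ℝ)) | m ⊔ MeasurableSpace.comap g inferInstance] := by
  have hcg : MeasurableSpace.comap g inferInstance ≤ mΩ := by
    rintro s ⟨t, ht, rfl⟩; exact hg ht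
  have hG : m ⊔ MeasurableSpace.comap g inferInstance ≤ mΩ := sup_le hm hcg
  have he_int : Integrable (B.indicator (fun _ => (1:ℝ))) P := (integrable_const (1:ℝ)).indicator hB
  have hGeq : m ⊔ MeasurableSpace.comap g inferInstance = MeasurableSpace.generateFrom
      {s | ∃ u, MeasurableSet[m] u ∧ ∃ t, MeasurableSet t ∧ s = u ∩ g ⁻¹' t} := by
    refine le_antisymm (sup_le ?_ ?_) (MeasurableSpace.generateFrom_le ?_)
    · intro u hu
      exact MeasurableSpace.measurableSet_generateFrom
        ⟨u, hu, Set.univ, MeasurableSet.univ, by simp⟩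
    · rintro s ⟨t, ht, rfl⟩
      exact MeasurableSpace.measurableSet_generateFrom
        ⟨Set.univ, MeasurableSet.univ, t, ht, by simp⟩
    · rintro s ⟨u, hu, t, ht, rfl⟩
      exact ((le_sup_left : m ≤ m ⊔ MeasurableSpace.comap g inferInstance) u hu).inter
        ((le_sup_right : MeasurableSpace.comap g inferInstance ≤
          m ⊔ MeasurableSpace.comap g inferInstance) _ ⟨t, ht, rfl⟩)
  have hPi : IsPiSystem
      {s : Set Ω | ∃ u, MeasurableSet[m] u ∧ ∃ t, MeasurableSet t ∧ s = u ∩ g ⁻¹' t} := by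
    rintro s ⟨u1, hu1, t1, ht1, rfl⟩ s' ⟨u2, hu2, t2, ht2, rfl⟩ -
    exact ⟨u1 ∩ u2, hu1.inter hu2, t1 ∩ t2, ht1.inter ht2, by
      rw [Set.preimage_inter, Set.inter_inter_inter_comm]⟩
  have key : ∀ s : Set Ω, MeasurableSet[m ⊔ MeasurableSpace.comap g inferInstance] s →
      ∫ ω in s, (P[B.indicator (fun _ => (1:ℝ))|m]) ω ∂P
        = ∫ ω in s, B.indicator (fun _ => (1:ℝ)) ω ∂P := by
    intro s hs
    refine MeasurableSpace.induction_on_inter (m := m ⊔ MeasurableSpace.comap g inferInstance)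
      (C := fun s _ => ∫ ω in s, (P[B.indicator (fun _ => (1:ℝ))|m]) ω ∂P
        = ∫ ω in s, B.indicator (fun _ => (1:ℝ)) ω ∂P) hGeq hPi ?_ ?_ ?_ ?_ s hs
    · simp
    · rintro s ⟨u, hu, t, ht, rfl⟩
      have hum : MeasurableSet u := hm u hu
      have hgt : MeasurableSet (g ⁻¹' t) := hg ht
      have hint1 : Integrable
          (fun ω => (P[B.indicator (fun _ => (1:ℝ))|m]) ω *
            (g ⁻¹' t).indicator (fun _ => (1:ℝ)) ω) P :=
        mul_indicator_integrable integrable_condExp hgt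
      calc ∫ ω in u ∩ g ⁻¹' t, (P[B.indicator (fun _ => (1:ℝ))|m]) ω ∂P
          = ∫ ω in u, (g ⁻¹' t).indicator (P[B.indicator (fun _ => (1:ℝ))|m]) ω ∂P :=
            (setIntegral_indicator hgt).symm
        _ = ∫ ω in u, (P[B.indicator (fun _ => (1:ℝ))|m]) ω *
              (g ⁻¹' t).indicator (fun _ => (1:ℝ)) ω ∂P := by
            refine setIntegral_congr_fun hum fun ω _ => ?_
            by_cases hω : ω ∈ g ⁻¹' t <;>
              simp [Set.indicator_of_mem, Set.indicator_of_notMem, hω]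
        _ = ∫ ω in u, (P[fun ω => (P[B.indicator (fun _ => (1:ℝ))|m]) ω *
              (g ⁻¹' t).indicator (fun _ => (1:ℝ)) ω|m]) ω ∂P :=
            (setIntegral_condExp hm hint1 hu).symm
        _ = ∫ ω in u, ((P[B.indicator (fun _ => (1:ℝ))|m]) ω *
              (P[(g ⁻¹' t).indicator (fun _ => (1:ℝ))|m]) ω) ∂P := by
            refine setIntegral_congr_ae (hm u hu) ?_
            filter_upwards [condExp_mul_of_stronglyMeasurable_left (stronglyMeasurable_condExp (m := m))
              hint1 ((integrable_const (1:ℝ)).indicator hgt)] with ω hω _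
            exact hω
        _ = ∫ ω in u, (P[(B ∩ g ⁻¹' t).indicator (fun _ => (1:ℝ))|m]) ω ∂P := by
            refine setIntegral_congr_ae (hm u hu) ?_
            filter_upwards [hfact t ht] with ω hω _
            exact hω.symm
        _ = ∫ ω in u, (B ∩ g ⁻¹' t).indicator (fun _ => (1:ℝ)) ω ∂P :=
            setIntegral_condExp hm ((integrable_const (1:ℝ)).indicator (hB.inter hgt)) hu
        _ = ∫ ω in u ∩ (B ∩ g ⁻¹' t), (1:ℝ) ∂P := setIntegral_indicator (hB.inter hgt)
        _ = ∫ ω in (u ∩ g ⁻¹' t) ∩ B, (1:ℝ) ∂P := by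
            rw [show u ∩ (B ∩ g ⁻¹' t) = (u ∩ g ⁻¹' t) ∩ B by
              ext ω; simp only [Set.mem_inter_iff]; tauto]
        _ = ∫ ω in u ∩ g ⁻¹' t, B.indicator (fun _ => (1:ℝ)) ω ∂P :=
            (setIntegral_indicator hB).symm
    · intro t htG ht
      have h1 := integral_add_compl (hG t htG)
        (integrable_condExp : Integrable (P[B.indicator (fun _ => (1:ℝ))|m]) P)
      have h2 := integral_add_compl (hG t htG) he_int
      have h3 : ∫ ω, (P[B.indicator (fun _ => (1:ℝ))|m]) ω ∂P
          = ∫ ω, B.indicator (fun _ => (1:ℝ)) ω ∂P := integral_condExp hm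
      linarith
    · intro f hdisj hmeas heq
      rw [integral_iUnion (fun i => hG _ (hmeas i)) hdisj integrable_condExp.integrableOn,
        integral_iUnion (fun i => hG _ (hmeas i)) hdisj he_int.integrableOn]
      exact tsum_congr heq
  exact ae_eq_condExp_of_forall_setIntegral_eq hG he_int
    (fun s _ _ => integrable_condExp.integrableOn) (fun s hs _ => key s hs)
    (((stronglyMeasurable_condExp (m := m)).mono (le_sup_left : m ≤ m ⊔ MeasurableSpace.comap g inferInstance)).aestronglyMeasurable)


private lemma setIntegral_mul_eq_of_fact (hm : m ≤ mΩ) {B : Set Ω} (hB : MeasurableSet B)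
    {g : Ω → ℝ} (hg : Measurable g) (hgi : Integrable g P)
    (hfact : ∀ t : Set ℝ, MeasurableSet t →
      (P[(B ∩ g ⁻¹' t).indicator (fun _ => (1:ℝ)) | m]) =ᵐ[P]
        fun ω => (P[B.indicator (fun _ => (1:ℝ)) | m]) ω *
          (P[(g ⁻¹' t).indicator (fun _ => (1:ℝ)) | m]) ω) :
    ∀ u : Set Ω, MeasurableSet[m] u →
      ∫ ω in u, B.indicator (fun _ => (1:ℝ)) ω * g ω ∂P
        = ∫ ω in u, (P[B.indicator (fun _ => (1:ℝ))|m]) ω * (P[g|m]) ω ∂P := by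
  intro u hu
  have hcg : MeasurableSpace.comap g inferInstance ≤ mΩ := by
    rintro s ⟨t, ht, rfl⟩; exact hg ht
  have hG : m ⊔ MeasurableSpace.comap g inferInstance ≤ mΩ := sup_le hm hcg
  have hL := condexp_join_of_fact hm hB hg hfact
  have he_int : Integrable (B.indicator (fun _ => (1:ℝ))) P := (integrable_const (1:ℝ)).indicator hB
  have hgG : StronglyMeasurable[m ⊔ MeasurableSpace.comap g inferInstance] g := by
    have h1 : Measurable[MeasurableSpace.comap g inferInstance] g := fun t ht => ⟨t, ht, rfl⟩
    exact (h1.mono (le_sup_right : MeasurableSpace.comap g inferInstance ≤ m ⊔ MeasurableSpace.comap g inferInstance) le_rfl).stronglyMeasurable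
  have hge_int : Integrable (fun ω => g ω * B.indicator (fun _ => (1:ℝ)) ω) P :=
    mul_indicator_integrable hgi hB
  have hbound : ∀ᵐ ω ∂P, ‖(P[B.indicator (fun _ => (1:ℝ))|m]) ω‖ ≤ 1 := by
    have h0 : (0 : Ω → ℝ) ≤ᵐ[P] P[B.indicator (fun _ => (1:ℝ))|m] :=
      condExp_nonneg (Filter.Eventually.of_forall fun ω => by
        by_cases hω : ω ∈ B <;> simp [Set.indicator_of_mem, Set.indicator_of_notMem, hω])
    have h1 : P[B.indicator (fun _ => (1:ℝ))|m] ≤ᵐ[P] fun _ => (1:ℝ) := by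
      have h := condExp_mono (m := m) (μ := P) he_int (integrable_const (1:ℝ))
        (Filter.Eventually.of_forall fun ω => by
          by_cases hω : ω ∈ B <;>
            simp [Set.indicator_of_mem, Set.indicator_of_notMem, hω])
      rwa [condExp_const hm (1:ℝ)] at h
    filter_upwards [h0, h1] with ω hω0 hω1
    rw [Real.norm_eq_abs, abs_of_nonneg hω0]
    exact hω1
  have hPeg_int : Integrable (fun ω => (P[B.indicator (fun _ => (1:ℝ))|m]) ω * g ω) P := by
    refine hgi.norm.mono'
      ((((stronglyMeasurable_condExp (m := m)).mono hm).measurable.mul hg).aestronglyMeasurable) ?_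
    filter_upwards [hbound] with ω hω
    calc ‖(P[B.indicator (fun _ => (1:ℝ))|m]) ω * g ω‖
        = ‖(P[B.indicator (fun _ => (1:ℝ))|m]) ω‖ * ‖g ω‖ := norm_mul _ _
      _ ≤ 1 * ‖g ω‖ := mul_le_mul_of_nonneg_right hω (norm_nonneg _)
      _ = ‖g ω‖ := one_mul _
  have huG : MeasurableSet[m ⊔ MeasurableSpace.comap g inferInstance] u :=
    (le_sup_left : m ≤ m ⊔ MeasurableSpace.comap g inferInstance) u hu
  calc ∫ ω in u, B.indicator (fun _ => (1:ℝ)) ω * g ω ∂P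
      = ∫ ω in u, g ω * B.indicator (fun _ => (1:ℝ)) ω ∂P := by simp_rw [mul_comm]
    _ = ∫ ω in u, (P[fun ω => g ω * B.indicator (fun _ => (1:ℝ)) ω|m ⊔ MeasurableSpace.comap g inferInstance]) ω ∂P :=
        (setIntegral_condExp hG hge_int huG).symm
    _ = ∫ ω in u, g ω * (P[B.indicator (fun _ => (1:ℝ))|m ⊔ MeasurableSpace.comap g inferInstance]) ω ∂P := by
        refine setIntegral_congr_ae (hG u huG) ?_
        filter_upwards [condExp_mul_of_stronglyMeasurable_left hgG hge_int he_int] with ω hω _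
        exact hω
    _ = ∫ ω in u, g ω * (P[B.indicator (fun _ => (1:ℝ))|m]) ω ∂P := by
        refine setIntegral_congr_ae (hG u huG) ?_
        filter_upwards [hL] with ω hω _
        rw [← hω]
    _ = ∫ ω in u, (P[B.indicator (fun _ => (1:ℝ))|m]) ω * g ω ∂P := by simp_rw [mul_comm]
    _ = ∫ ω in u, (P[fun ω => (P[B.indicator (fun _ => (1:ℝ))|m]) ω * g ω|m]) ω ∂P :=
        (setIntegral_condExp hm hPeg_int hu).symm
    _ = ∫ ω in u, (P[B.indicator (fun _ => (1:ℝ))|m]) ω * (P[g|m]) ω ∂P := by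
        refine setIntegral_congr_ae (hm u hu) ?_
        filter_upwards [condExp_mul_of_stronglyMeasurable_left (stronglyMeasurable_condExp (m := m))
          hPeg_int hgi] with ω hω _
        exact hω


private lemma key_arm {𝒳 : Type*} [m𝒳 : MeasurableSpace 𝒳]
    (X : Ω → 𝒳) (hX : Measurable X)
    {B : Set Ω} (hB : MeasurableSet B)
    {W W' Y : Ω → ℝ} (hWae : W =ᵐ[P] W')
    (hYW : ∀ ω ∈ B, Y ω = W ω)
    {μ1 : 𝒳 → ℝ} (hμ1meas : Measurable μ1)
    (hμ1 : ∀ S : Set 𝒳, MeasurableSet S →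
      ∫ ω in X ⁻¹' S ∩ B, Y ω ∂P = ∫ ω in X ⁻¹' S ∩ B, μ1 (X ω) ∂P)
    {ρ : 𝒳 → ℝ} (hρmeas : Measurable ρ)
    (hρbd : ∀ᵐ ω ∂P, 0 ≤ ρ (X ω) ∧ ρ (X ω) ≤ 1)
    (hρcond : (fun ω => ρ (X ω)) =ᵐ[P]
      P[B.indicator (fun _ => (1:ℝ)) | MeasurableSpace.comap X m𝒳])
    (keyint : ∀ u : Set Ω, MeasurableSet[MeasurableSpace.comap X m𝒳] u →
      ∫ ω in u, B.indicator (fun _ => (1:ℝ)) ω * W' ω ∂P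
        = ∫ ω in u, (P[B.indicator (fun _ => (1:ℝ))|MeasurableSpace.comap X m𝒳]) ω *
            (P[W'|MeasurableSpace.comap X m𝒳]) ω ∂P) :
    (fun ω => ρ (X ω) * (P[W|MeasurableSpace.comap X m𝒳]) ω) =ᵐ[P]
      fun ω => ρ (X ω) * μ1 (X ω) := by
  have hm : MeasurableSpace.comap X m𝒳 ≤ mΩ := by
    rintro s ⟨t, ht, rfl⟩; exact hX ht
  have hXm : Measurable[MeasurableSpace.comap X m𝒳] X := fun s hs => ⟨s, hs, rfl⟩
  have hECW : P[W'|MeasurableSpace.comap X m𝒳] =ᵐ[P] P[W|MeasurableSpace.comap X m𝒳] :=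
    condExp_congr_ae hWae.symm
  have hT : ∀ n : ℕ, MeasurableSet {x : 𝒳 | |μ1 x| ≤ (n:ℝ)} := fun n =>
    measurableSet_le hμ1meas.abs measurable_const
  have hFG : ∀ n : ℕ,
      (X ⁻¹' {x : 𝒳 | |μ1 x| ≤ (n:ℝ)}).indicator
          (fun ω => ρ (X ω) * (P[W|MeasurableSpace.comap X m𝒳]) ω) =ᵐ[P]
        (X ⁻¹' {x : 𝒳 | |μ1 x| ≤ (n:ℝ)}).indicator (fun ω => ρ (X ω) * μ1 (X ω)) := by
    intro n
    have hTn : MeasurableSet (X ⁻¹' {x : 𝒳 | |μ1 x| ≤ (n:ℝ)}) := hX (hT n)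
    have hFint : Integrable ((X ⁻¹' {x : 𝒳 | |μ1 x| ≤ (n:ℝ)}).indicator
        (fun ω => ρ (X ω) * (P[W|MeasurableSpace.comap X m𝒳]) ω)) P := by
      refine (integrable_condExp (m := MeasurableSpace.comap X m𝒳) (f := W)).norm.mono'
        ((((hρmeas.comp hX).mul (((stronglyMeasurable_condExp
          (m := MeasurableSpace.comap X m𝒳)).mono hm).measurable)).indicator
            hTn).aestronglyMeasurable) ?_
      filter_upwards [hρbd] with ω hω
      by_cases hmem : ω ∈ X ⁻¹' {x : 𝒳 | |μ1 x| ≤ (n:ℝ)}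
      · rw [Set.indicator_of_mem hmem, Real.norm_eq_abs, abs_mul]
        calc |ρ (X ω)| * |(P[W|MeasurableSpace.comap X m𝒳]) ω|
            ≤ 1 * |(P[W|MeasurableSpace.comap X m𝒳]) ω| := by
              refine mul_le_mul_of_nonneg_right ?_ (abs_nonneg _)
              rw [abs_of_nonneg hω.1]; exact hω.2
          _ = ‖(P[W|MeasurableSpace.comap X m𝒳]) ω‖ := by rw [one_mul, Real.norm_eq_abs]
      · rw [Set.indicator_of_notMem hmem]
        simp [abs_nonneg]
    have hGint : Integrable ((X ⁻¹' {x : 𝒳 | |μ1 x| ≤ (n:ℝ)}).indicator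
        (fun ω => ρ (X ω) * μ1 (X ω))) P := by
      refine (integrable_const ((n:ℝ))).mono'
        ((((hρmeas.comp hX).mul (hμ1meas.comp hX)).indicator hTn).aestronglyMeasurable) ?_
      filter_upwards [hρbd] with ω hω
      by_cases hmem : ω ∈ X ⁻¹' {x : 𝒳 | |μ1 x| ≤ (n:ℝ)}
      · rw [Set.indicator_of_mem hmem, Real.norm_eq_abs, abs_mul]
        have h1 : |ρ (X ω)| ≤ 1 := by rw [abs_of_nonneg hω.1]; exact hω.2
        have h2 : |μ1 (X ω)| ≤ (n:ℝ) := hmem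
        calc |ρ (X ω)| * |μ1 (X ω)| ≤ 1 * (n:ℝ) :=
              mul_le_mul h1 h2 (abs_nonneg _) zero_le_one
          _ = (n:ℝ) := one_mul _
      · rw [Set.indicator_of_notMem hmem]
        simp
    refine ae_eq_of_forall_setIntegral_eq_of_sigmaFinite' hm
      (fun s _ _ => hFint.integrableOn) (fun s _ _ => hGint.integrableOn) ?_ ?_ ?_
    · rintro s ⟨S, hS, rfl⟩ -
      have hS' : MeasurableSet (S ∩ {x : 𝒳 | |μ1 x| ≤ (n:ℝ)}) := hS.inter (hT n)
      have hu_m : MeasurableSet[MeasurableSpace.comap X m𝒳]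
          (X ⁻¹' (S ∩ {x : 𝒳 | |μ1 x| ≤ (n:ℝ)})) := ⟨_, hS', rfl⟩
      have huΩ : MeasurableSet (X ⁻¹' (S ∩ {x : 𝒳 | |μ1 x| ≤ (n:ℝ)})) := hX hS'
      have hgn_int : Integrable (fun ω => ({x : 𝒳 | |μ1 x| ≤ (n:ℝ)}.indicator μ1) (X ω)) P := by
        refine (integrable_const ((n:ℝ))).mono'
          (((hμ1meas.indicator (hT n)).comp hX).aestronglyMeasurable) ?_
        refine Filter.Eventually.of_forall fun ω => ?_
        by_cases hmem : X ω ∈ {x : 𝒳 | |μ1 x| ≤ (n:ℝ)}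
        · rw [Set.indicator_of_mem hmem]; exact hmem
        · rw [Set.indicator_of_notMem hmem]; simp
      have hint : Integrable
          (fun ω => ({x : 𝒳 | |μ1 x| ≤ (n:ℝ)}.indicator μ1) (X ω) *
            B.indicator (fun _ => (1:ℝ)) ω) P :=
        mul_indicator_integrable hgn_int hB
      have hsm : StronglyMeasurable[MeasurableSpace.comap X m𝒳]
          (fun ω => ({x : 𝒳 | |μ1 x| ≤ (n:ℝ)}.indicator μ1) (X ω)) :=
        (Measurable.stronglyMeasurable ((hμ1meas.indicator (hT n)).comp hXm))
      calc ∫ ω in X ⁻¹' S, (X ⁻¹' {x : 𝒳 | |μ1 x| ≤ (n:ℝ)}).indicator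
              (fun ω => ρ (X ω) * (P[W|MeasurableSpace.comap X m𝒳]) ω) ω ∂P
          = ∫ ω in X ⁻¹' S ∩ X ⁻¹' {x : 𝒳 | |μ1 x| ≤ (n:ℝ)},
              ρ (X ω) * (P[W|MeasurableSpace.comap X m𝒳]) ω ∂P := setIntegral_indicator hTn
        _ = ∫ ω in X ⁻¹' (S ∩ {x : 𝒳 | |μ1 x| ≤ (n:ℝ)}),
              ρ (X ω) * (P[W|MeasurableSpace.comap X m𝒳]) ω ∂P := by rw [Set.preimage_inter]
        _ = ∫ ω in X ⁻¹' (S ∩ {x : 𝒳 | |μ1 x| ≤ (n:ℝ)}),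
              (P[B.indicator (fun _ => (1:ℝ))|MeasurableSpace.comap X m𝒳]) ω *
                (P[W'|MeasurableSpace.comap X m𝒳]) ω ∂P := by
            refine setIntegral_congr_ae huΩ ?_
            filter_upwards [hρcond, hECW] with ω h1 h2 _
            rw [← h1, h2]
        _ = ∫ ω in X ⁻¹' (S ∩ {x : 𝒳 | |μ1 x| ≤ (n:ℝ)}),
              B.indicator (fun _ => (1:ℝ)) ω * W' ω ∂P := (keyint _ hu_m).symm
        _ = ∫ ω in X ⁻¹' (S ∩ {x : 𝒳 | |μ1 x| ≤ (n:ℝ)}),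
              B.indicator (fun _ => (1:ℝ)) ω * W ω ∂P := by
            refine setIntegral_congr_ae huΩ ?_
            filter_upwards [hWae] with ω h _
            rw [h]
        _ = ∫ ω in X ⁻¹' (S ∩ {x : 𝒳 | |μ1 x| ≤ (n:ℝ)}), B.indicator W ω ∂P := by
            refine setIntegral_congr_fun huΩ fun ω _ => ?_
            by_cases hmem : ω ∈ B <;>
              simp [Set.indicator_of_mem, Set.indicator_of_notMem, hmem]
        _ = ∫ ω in X ⁻¹' (S ∩ {x : 𝒳 | |μ1 x| ≤ (n:ℝ)}) ∩ B, W ω ∂P := setIntegral_indicator hB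
        _ = ∫ ω in X ⁻¹' (S ∩ {x : 𝒳 | |μ1 x| ≤ (n:ℝ)}) ∩ B, Y ω ∂P := by
            refine setIntegral_congr_fun (huΩ.inter hB) fun ω hω => ?_
            exact (hYW ω hω.2).symm
        _ = ∫ ω in X ⁻¹' (S ∩ {x : 𝒳 | |μ1 x| ≤ (n:ℝ)}) ∩ B, μ1 (X ω) ∂P := hμ1 _ hS'
        _ = ∫ ω in X ⁻¹' (S ∩ {x : 𝒳 | |μ1 x| ≤ (n:ℝ)}) ∩ B,
              ({x : 𝒳 | |μ1 x| ≤ (n:ℝ)}.indicator μ1) (X ω) ∂P := by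
            refine setIntegral_congr_fun (huΩ.inter hB) fun ω hω => ?_
            rw [Set.indicator_of_mem hω.1.2]
        _ = ∫ ω in X ⁻¹' (S ∩ {x : 𝒳 | |μ1 x| ≤ (n:ℝ)}),
              B.indicator (fun ω => ({x : 𝒳 | |μ1 x| ≤ (n:ℝ)}.indicator μ1) (X ω)) ω ∂P :=
            (setIntegral_indicator hB).symm
        _ = ∫ ω in X ⁻¹' (S ∩ {x : 𝒳 | |μ1 x| ≤ (n:ℝ)}),
              ({x : 𝒳 | |μ1 x| ≤ (n:ℝ)}.indicator μ1) (X ω) *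
                B.indicator (fun _ => (1:ℝ)) ω ∂P := by
            refine setIntegral_congr_fun huΩ fun ω _ => ?_
            by_cases hmem : ω ∈ B <;>
              simp [Set.indicator_of_mem, Set.indicator_of_notMem, hmem]
        _ = ∫ ω in X ⁻¹' (S ∩ {x : 𝒳 | |μ1 x| ≤ (n:ℝ)}),
              (P[fun ω => ({x : 𝒳 | |μ1 x| ≤ (n:ℝ)}.indicator μ1) (X ω) *
                B.indicator (fun _ => (1:ℝ)) ω|MeasurableSpace.comap X m𝒳]) ω ∂P :=
            (setIntegral_condExp hm hint hu_m).symm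
        _ = ∫ ω in X ⁻¹' (S ∩ {x : 𝒳 | |μ1 x| ≤ (n:ℝ)}),
              ({x : 𝒳 | |μ1 x| ≤ (n:ℝ)}.indicator μ1) (X ω) *
                (P[B.indicator (fun _ => (1:ℝ))|MeasurableSpace.comap X m𝒳]) ω ∂P := by
            refine setIntegral_congr_ae huΩ ?_
            filter_upwards [condExp_mul_of_stronglyMeasurable_left hsm hint
              ((integrable_const (1:ℝ)).indicator hB)] with ω hω _
            exact hω
        _ = ∫ ω in X ⁻¹' (S ∩ {x : 𝒳 | |μ1 x| ≤ (n:ℝ)}),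
              ({x : 𝒳 | |μ1 x| ≤ (n:ℝ)}.indicator μ1) (X ω) * ρ (X ω) ∂P := by
            refine setIntegral_congr_ae huΩ ?_
            filter_upwards [hρcond] with ω h1 _
            rw [← h1]
        _ = ∫ ω in X ⁻¹' (S ∩ {x : 𝒳 | |μ1 x| ≤ (n:ℝ)}), ρ (X ω) * μ1 (X ω) ∂P := by
            refine setIntegral_congr_fun huΩ fun ω hω => ?_
            rw [Set.indicator_of_mem hω.2, mul_comm]
        _ = ∫ ω in X ⁻¹' S ∩ X ⁻¹' {x : 𝒳 | |μ1 x| ≤ (n:ℝ)}, ρ (X ω) * μ1 (X ω) ∂P := by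
            rw [Set.preimage_inter]
        _ = ∫ ω in X ⁻¹' S, (X ⁻¹' {x : 𝒳 | |μ1 x| ≤ (n:ℝ)}).indicator
              (fun ω => ρ (X ω) * μ1 (X ω)) ω ∂P := (setIntegral_indicator hTn).symm
    · exact (((hρmeas.comp hXm).stronglyMeasurable.mul
        (stronglyMeasurable_condExp (m := MeasurableSpace.comap X m𝒳))).indicator
          ⟨_, hT n, rfl⟩).aestronglyMeasurable
    · exact (((hρmeas.comp hXm).stronglyMeasurable.mul
        ((hμ1meas.comp hXm).stronglyMeasurable)).indicator ⟨_, hT n, rfl⟩).aestronglyMeasurable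
  have hall := ae_all_iff.mpr hFG
  filter_upwards [hall] with ω hω
  obtain ⟨n, hn⟩ := exists_nat_ge (|μ1 (X ω)|)
  have hmem : ω ∈ X ⁻¹' {x : 𝒳 | |μ1 x| ≤ (n:ℝ)} := hn
  have h := hω n
  rwa [Set.indicator_of_mem hmem, Set.indicator_of_mem hmem] at h

end Aux

/-- Identification of the incremental effect for one time point (regression form).
Under consistency and exchangeability, the counterfactual mean
`E[Y^Q] = E[q(π(X);δ) E(Y¹|X) + (1 - q(π(X);δ)) E(Y⁰|X)]` under the incremental
propensity score intervention `q(π;δ) = δπ/(δπ+1-π)` equals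
`E[(δπ(X)μ(X,1) + (1-π(X))μ(X,0))/(δπ(X)+1-π(X))]`. -/
theorem incremental_identification_regression_form
    {Ω 𝒳 : Type*} [MeasurableSpace Ω] [StandardBorelSpace Ω] [Nonempty Ω]
    [MeasurableSpace 𝒳]
    (P : Measure Ω) [IsProbabilityMeasure P]
    (X : Ω → 𝒳) (A Y Y0 Y1 : Ω → ℝ)
    (hX : Measurable X) (hA : Measurable A) (hY : Measurable Y)
    (hY0 : Integrable Y0 P) (hY1 : Integrable Y1 P)
    (hAbin : ∀ ω, A ω = 0 ∨ A ω = 1)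
    -- consistency: Y = Yᵃ on {A = a}
    (hcons : ∀ ω, Y ω = if A ω = 1 then Y1 ω else Y0 ω)
    -- exchangeability: A ⟂ Yᵃ | X for a = 0, 1
    (hexch0 : CondIndepFun (MeasurableSpace.comap X inferInstance) hX.comap_le A Y0 P)
    (hexch1 : CondIndepFun (MeasurableSpace.comap X inferInstance) hX.comap_le A Y1 P)
    -- π(x) = P(A = 1 | X = x)
    (π : 𝒳 → ℝ) (hπmeas : Measurable π)
    (hπ : (fun ω => π (X ω)) =ᵐ[P] P[A|MeasurableSpace.comap X inferInstance])
    -- μ(x,a) = E[Y | X = x, A = a]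
    (μ1 μ0 : 𝒳 → ℝ) (hμ1meas : Measurable μ1) (hμ0meas : Measurable μ0)
    (hμ1 : ∀ S : Set 𝒳, MeasurableSet S →
      ∫ ω in X ⁻¹' S ∩ {ω | A ω = 1}, Y ω ∂P = ∫ ω in X ⁻¹' S ∩ {ω | A ω = 1}, μ1 (X ω) ∂P)
    (hμ0 : ∀ S : Set 𝒳, MeasurableSet S →
      ∫ ω in X ⁻¹' S ∩ {ω | A ω = 0}, Y ω ∂P = ∫ ω in X ⁻¹' S ∩ {ω | A ω = 0}, μ0 (X ω) ∂P)
    (δ : ℝ) (hδ : 0 < δ) :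
    ∫ ω, ((δ * π (X ω) / (δ * π (X ω) + 1 - π (X ω))) * (P[Y1|MeasurableSpace.comap X inferInstance]) ω
        + (1 - δ * π (X ω) / (δ * π (X ω) + 1 - π (X ω))) * (P[Y0|MeasurableSpace.comap X inferInstance]) ω) ∂P
      = ∫ ω, (δ * π (X ω) * μ1 (X ω) + (1 - π (X ω)) * μ0 (X ω)) / (δ * π (X ω) + 1 - π (X ω)) ∂P := by
  classical
  have hsetB1 : A ⁻¹' ({1} : Set ℝ) = {ω | A ω = 1} := by ext ω; simp
  have hsetB0 : A ⁻¹' ({0} : Set ℝ) = {ω | A ω = 0} := by ext ω; simp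
  have hB1 : MeasurableSet {ω | A ω = 1} := hsetB1 ▸ hA (measurableSet_singleton 1)
  have hB0 : MeasurableSet {ω | A ω = 0} := hsetB0 ▸ hA (measurableSet_singleton 0)
  have hindA1 : ({ω | A ω = 1} : Set Ω).indicator (fun _ => (1:ℝ)) = A := by
    funext ω
    rcases hAbin ω with h | h
    · have hω : ω ∉ {ω | A ω = 1} := by simp [Set.mem_setOf_eq, h]
      rw [Set.indicator_of_notMem hω, h]
    · have hω : ω ∈ {ω | A ω = 1} := h
      rw [Set.indicator_of_mem hω, h]
  have hindA0 : ({ω | A ω = 0} : Set Ω).indicator (fun _ => (1:ℝ)) = fun ω => 1 - A ω := by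
    funext ω
    rcases hAbin ω with h | h
    · have hω : ω ∈ {ω | A ω = 0} := h
      rw [Set.indicator_of_mem hω, h]; norm_num
    · have hω : ω ∉ {ω | A ω = 0} := by simp [Set.mem_setOf_eq, h]
      rw [Set.indicator_of_notMem hω, h]; norm_num
  have hAint : Integrable A P := by
    refine (integrable_const (1:ℝ)).mono' hA.aestronglyMeasurable
      (Filter.Eventually.of_forall fun ω => ?_)
    rcases hAbin ω with h | h <;> simp [h]
  obtain ⟨Y1', hY1'meas, hY1'ae⟩ : ∃ Y1' : Ω → ℝ, Measurable Y1' ∧ Y1 =ᵐ[P] Y1' :=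
    ⟨hY1.aestronglyMeasurable.aemeasurable.mk Y1,
      hY1.aestronglyMeasurable.aemeasurable.measurable_mk,
      hY1.aestronglyMeasurable.aemeasurable.ae_eq_mk⟩
  obtain ⟨Y0', hY0'meas, hY0'ae⟩ : ∃ Y0' : Ω → ℝ, Measurable Y0' ∧ Y0 =ᵐ[P] Y0' :=
    ⟨hY0.aestronglyMeasurable.aemeasurable.mk Y0,
      hY0.aestronglyMeasurable.aemeasurable.measurable_mk,
      hY0.aestronglyMeasurable.aemeasurable.ae_eq_mk⟩
  have hY1'int : Integrable Y1' P := hY1.congr hY1'ae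
  have hY0'int : Integrable Y0' P := hY0.congr hY0'ae
  -- transfer conditional independence along a.e. equality
  have transfer : ∀ W W' : Ω → ℝ, W =ᵐ[P] W' →
      CondIndepFun (MeasurableSpace.comap X inferInstance) hX.comap_le A W P →
      CondIndepFun (MeasurableSpace.comap X inferInstance) hX.comap_le A W' P := by
    intro W W' hWW hCI
    have hNmeas : MeasurableSet (MeasureTheory.toMeasurable P {ω | W ω ≠ W' ω}) :=
      measurableSet_toMeasurable P _
    have hN0 : P (MeasureTheory.toMeasurable P {ω | W ω ≠ W' ω}) = 0 := by
      rw [measure_toMeasurable]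
      exact ae_iff.mp hWW
    have hκN : ∀ᵐ ω ∂P,
        condExpKernel P (MeasurableSpace.comap X inferInstance) ω
          (MeasureTheory.toMeasurable P {ω | W ω ≠ W' ω}) = 0 := by
      have h1 := condExpKernel_ae_eq_condExp (μ := P) hX.comap_le hNmeas
      have h2 : (P⟦MeasureTheory.toMeasurable P {ω | W ω ≠ W' ω}|MeasurableSpace.comap X inferInstance⟧)
          =ᵐ[P] 0 := by
        have hind : (MeasureTheory.toMeasurable P {ω | W ω ≠ W' ω}).indicator
            (fun _ => (1:ℝ)) =ᵐ[P] 0 := by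
          have hNae : ∀ᵐ ω ∂P, ω ∉ MeasureTheory.toMeasurable P {ω | W ω ≠ W' ω} := by
            rw [ae_iff]
            simpa using hN0
          filter_upwards [hNae] with ω hω
          simp [Set.indicator_of_notMem hω]
        refine (condExp_congr_ae hind).trans ?_
        rw [condExp_zero]
      filter_upwards [h1, h2] with ω hω1 hω2
      have hto : (condExpKernel P (MeasurableSpace.comap X inferInstance) ω
          (MeasureTheory.toMeasurable P {ω | W ω ≠ W' ω})).toReal = 0 := by
        rw [← measureReal_def, hω1, hω2]
        rfl
      have hfin : condExpKernel P (MeasurableSpace.comap X inferInstance) ω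
          (MeasureTheory.toMeasurable P {ω | W ω ≠ W' ω}) ≠ ⊤ := measure_ne_top _ _
      exact ((ENNReal.toReal_eq_zero_iff _).mp hto).resolve_right hfin
    have hEm : MeasurableSet[MeasurableSpace.comap X inferInstance]
        {ω | ¬ condExpKernel P (MeasurableSpace.comap X inferInstance) ω
          (MeasureTheory.toMeasurable P {ω | W ω ≠ W' ω}) = 0} :=
      ((measurable_condExpKernel (μ := P) (m := MeasurableSpace.comap X inferInstance) hNmeas)
        (measurableSet_singleton 0)).compl
    have htrim : ∀ᵐ ω ∂(P.trim hX.comap_le),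
        condExpKernel P (MeasurableSpace.comap X inferInstance) ω
          (MeasureTheory.toMeasurable P {ω | W ω ≠ W' ω}) = 0 := by
      rw [ae_iff, trim_measurableSet_eq hX.comap_le hEm]
      exact ae_iff.mp hκN
    refine Kernel.IndepFun.congr' hCI ?_ ?_
    · exact Filter.Eventually.of_forall fun a => Filter.EventuallyEq.rfl
    · filter_upwards [htrim] with a ha
      rw [Filter.EventuallyEq, ae_iff]
      exact measure_mono_null (fun ω hω => subset_toMeasurable P _ hω) ha
  have hexch1' := transfer Y1 Y1' hY1'ae hexch1
  have hexch0' := transfer Y0 Y0' hY0'ae hexch0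
  have hfact1 : ∀ t : Set ℝ, MeasurableSet t →
      (P[({ω | A ω = 1} ∩ Y1' ⁻¹' t).indicator (fun _ => (1:ℝ)) | MeasurableSpace.comap X inferInstance]) =ᵐ[P]
        fun ω => (P[({ω | A ω = 1} : Set Ω).indicator (fun _ => (1:ℝ)) | MeasurableSpace.comap X inferInstance]) ω *
          (P[(Y1' ⁻¹' t).indicator (fun _ => (1:ℝ)) | MeasurableSpace.comap X inferInstance]) ω := by
    intro t ht
    have h := (condIndepFun_iff_condExp_inter_preimage_eq_mul hA hY1'meas).mp hexch1'
      {1} t (measurableSet_singleton 1) ht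
    rw [hsetB1] at h
    exact h
  have hfact0 : ∀ t : Set ℝ, MeasurableSet t →
      (P[({ω | A ω = 0} ∩ Y0' ⁻¹' t).indicator (fun _ => (1:ℝ)) | MeasurableSpace.comap X inferInstance]) =ᵐ[P]
        fun ω => (P[({ω | A ω = 0} : Set Ω).indicator (fun _ => (1:ℝ)) | MeasurableSpace.comap X inferInstance]) ω *
          (P[(Y0' ⁻¹' t).indicator (fun _ => (1:ℝ)) | MeasurableSpace.comap X inferInstance]) ω := by
    intro t ht
    have h := (condIndepFun_iff_condExp_inter_preimage_eq_mul hA hY0'meas).mp hexch0'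
      {0} t (measurableSet_singleton 0) ht
    rw [hsetB0] at h
    exact h
  have key1int := setIntegral_mul_eq_of_fact hX.comap_le hB1 hY1'meas hY1'int hfact1
  have key0int := setIntegral_mul_eq_of_fact hX.comap_le hB0 hY0'meas hY0'int hfact0
  have hπbd : ∀ᵐ ω ∂P, 0 ≤ π (X ω) ∧ π (X ω) ≤ 1 := by
    have h0 : (0 : Ω → ℝ) ≤ᵐ[P] P[A|MeasurableSpace.comap X inferInstance] :=
      condExp_nonneg (Filter.Eventually.of_forall fun ω => by
        rcases hAbin ω with h | h <;> simp [h])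
    have h1 : P[A|MeasurableSpace.comap X inferInstance] ≤ᵐ[P] fun _ => (1:ℝ) := by
      have h := condExp_mono (m := MeasurableSpace.comap X inferInstance) (μ := P) hAint
        (integrable_const (1:ℝ)) (Filter.Eventually.of_forall fun ω => by
          rcases hAbin ω with h | h <;> simp [h])
      rwa [condExp_const hX.comap_le (1:ℝ)] at h
    filter_upwards [h0, h1, hπ] with ω hω0 hω1 hωπ
    refine ⟨?_, ?_⟩
    · rw [hωπ]; exact hω0
    · rw [hωπ]; exact hω1
  have hρcond1 : (fun ω => π (X ω)) =ᵐ[P]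
      P[({ω | A ω = 1} : Set Ω).indicator (fun _ => (1:ℝ))|MeasurableSpace.comap X inferInstance] := by
    rw [hindA1]; exact hπ
  have hρcond0 : (fun ω => 1 - π (X ω)) =ᵐ[P]
      P[({ω | A ω = 0} : Set Ω).indicator (fun _ => (1:ℝ))|MeasurableSpace.comap X inferInstance] := by
    rw [hindA0]
    have hsub : (fun ω => (1:ℝ) - A ω) = (fun _ => (1:ℝ)) - A := rfl
    rw [hsub]
    have h := condExp_sub (m := MeasurableSpace.comap X inferInstance) (μ := P)
      (integrable_const (1:ℝ)) hAint
    refine Filter.EventuallyEq.trans ?_ h.symm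
    rw [condExp_const hX.comap_le (1:ℝ)]
    filter_upwards [hπ] with ω hω
    simp [hω]
  have hYW1 : ∀ ω ∈ {ω | A ω = 1}, Y ω = Y1 ω := by
    intro ω h
    have h' : A ω = 1 := h
    rw [hcons ω, if_pos h']
  have hYW0 : ∀ ω ∈ {ω | A ω = 0}, Y ω = Y0 ω := by
    intro ω h
    have h' : A ω = 0 := h
    rw [hcons ω, if_neg ?_]
    intro hc
    rw [h'] at hc
    norm_num at hc
  have key1 := key_arm X hX hB1 hY1'ae hYW1 hμ1meas hμ1 hπmeas hπbd hρcond1 key1int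
  have hρ0bd : ∀ᵐ ω ∂P, 0 ≤ 1 - π (X ω) ∧ 1 - π (X ω) ≤ 1 := by
    filter_upwards [hπbd] with ω h
    constructor <;> linarith [h.1, h.2]
  have key0 := key_arm X hX hB0 hY0'ae hYW0 hμ0meas hμ0 (ρ := fun x => 1 - π x)
      (measurable_const.sub hπmeas) hρ0bd hρcond0 key0int
  refine integral_congr_ae ?_
  filter_upwards [key1, key0, hπbd] with ω h1 h0 hbd
  obtain ⟨hp0, hp1⟩ := hbd
  have h1' : π (X ω) * (P[Y1|MeasurableSpace.comap X inferInstance]) ω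
      = π (X ω) * μ1 (X ω) := h1
  have h0' : (1 - π (X ω)) * (P[Y0|MeasurableSpace.comap X inferInstance]) ω
      = (1 - π (X ω)) * μ0 (X ω) := h0
  have hd : 0 < δ * π (X ω) + 1 - π (X ω) := by
    rcases lt_or_ge (π (X ω)) 1 with h | h
    · have h2 : 0 ≤ δ * π (X ω) := mul_nonneg hδ.le hp0
      linarith
    · have h2 : π (X ω) = 1 := le_antisymm hp1 h
      rw [h2]
      simpa using hδ
  have hdne : δ * π (X ω) + 1 - π (X ω) ≠ 0 := ne_of_gt hd
  have hkey : δ * π (X ω) * (P[Y1|MeasurableSpace.comap X inferInstance]) ω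
        + (1 - π (X ω)) * (P[Y0|MeasurableSpace.comap X inferInstance]) ω
      = δ * π (X ω) * μ1 (X ω) + (1 - π (X ω)) * μ0 (X ω) := by
    have a1 : δ * (π (X ω) * (P[Y1|MeasurableSpace.comap X inferInstance]) ω)
        = δ * (π (X ω) * μ1 (X ω)) := by rw [h1']
    linarith [a1, h0']
  calc δ * π (X ω) / (δ * π (X ω) + 1 - π (X ω)) * (P[Y1|MeasurableSpace.comap X inferInstance]) ω
        + (1 - δ * π (X ω) / (δ * π (X ω) + 1 - π (X ω))) * (P[Y0|MeasurableSpace.comap X inferInstance]) ω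
      = (δ * π (X ω) * (P[Y1|MeasurableSpace.comap X inferInstance]) ω
          + (1 - π (X ω)) * (P[Y0|MeasurableSpace.comap X inferInstance]) ω)
          / (δ * π (X ω) + 1 - π (X ω)) := by
        have e2 : (1 - δ * π (X ω) / (δ * π (X ω) + 1 - π (X ω)))
            = (1 - π (X ω)) / (δ * π (X ω) + 1 - π (X ω)) := by
          rw [eq_div_iff hdne, sub_mul, div_mul_cancel₀ _ hdne]
          ring
        rw [e2, div_mul_eq_mul_div, div_mul_eq_mul_div, ← add_div]
    _ = (δ * π (X ω) * μ1 (X ω) + (1 - π (X ω)) * μ0 (X ω)) / (δ * π (X ω) + 1 - π (X ω)) := by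
        rw [hkey]
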